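/- Grid covering of types: fix n ≥ 1, alphabet size d ≥ 2, and an integer t with 1 ≤ t ≤ n. Partition each of the d−1 free coordinates of the type grid [0,n]^{d−1} into t intervals of length n/t. Then every type f of a length-n sequence has a representative type g (a 'center' of its subgrid) such that the neighbor distance (half the L1 distance between type vectors) between f and g is at most (d−1)n/t, and the number of representatives is at most t^{d−1}. -/
import Mathlib


/-- Grid covering of types: for `n ≥ 1`, alphabet size `d ≥ 2` and an
integer grid parameter `1 ≤ t ≤ n`, there is a set `R` of representative types with
`|R| ≤ t^(d−1)` such that every type `f` of a length-`n` sequence has a representative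
`g ∈ R` within neighbor distance (half the `ℓ₁`-distance of the type vectors) at most
`(d−1)·n/t`. -/
theorem grid_covering_of_types (n d t : ℕ)
    (hn : 1 ≤ n) (hd : 2 ≤ d) (ht1 : 1 ≤ t) (htn : t ≤ n) :
    ∃ R : Finset (Fin d → ℕ),
      R ⊆ Finset.Nat.antidiagonalTuple d n ∧
      R.card ≤ t ^ (d - 1) ∧
      ∀ f ∈ Finset.Nat.antidiagonalTuple d n, ∃ g ∈ R,
        (∑ i, |(f i : ℝ) - (g i : ℝ)|) / 2 ≤ ((d : ℝ) - 1) * n / t := by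
  obtain ⟨d', rfl⟩ : ∃ d', d = d' + 1 := ⟨d - 1, by omega⟩
  have hn0 : 0 < n := hn
  have ht0 : 0 < t := ht1
  set bucket : ℕ → ℕ := fun m => min (m * t / n) (t - 1) with hbucket
  set L : ℕ → ℕ := fun m => (bucket m * n + (t - 1)) / t with hLdef
  have hbuck_lt : ∀ m, bucket m < t := by
    intro m
    simp only [hbucket]
    omega
  -- bucket m * n ≤ t * m  (for m ≤ n)
  have hbn : ∀ m, m ≤ n → bucket m * n ≤ t * m := by
    intro m hm
    rcases eq_or_lt_of_le hm with h | h
    · rw [h]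
      exact Nat.mul_le_mul_right n (le_of_lt (hbuck_lt n))
    · have h1 : bucket m ≤ m * t / n := min_le_left _ _
      calc bucket m * n ≤ (m * t / n) * n := Nat.mul_le_mul_right _ h1
        _ ≤ m * t := Nat.div_mul_le_self _ _
        _ = t * m := Nat.mul_comm _ _
  -- t * m ≤ (bucket m + 1) * n  (for m ≤ n)
  have hmb : ∀ m, m ≤ n → t * m ≤ (bucket m + 1) * n := by
    intro m hm
    rcases eq_or_lt_of_le hm with h | h
    · have hb : t ≤ bucket n + 1 := by
        have : n * t / n = t := Nat.mul_div_cancel_left t hn0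
        simp only [hbucket]
        omega
      rw [h]
      exact Nat.mul_le_mul_right n hb
    · have hlt : m * t / n < t := by
        rw [Nat.div_lt_iff_lt_mul hn0, Nat.mul_comm t n]
        exact (Nat.mul_lt_mul_right ht0).mpr h
      have hb : bucket m = m * t / n := min_eq_left (by omega)
      have := Nat.lt_mul_div_succ (m * t) hn0
      rw [hb]
      calc t * m = m * t := Nat.mul_comm _ _
        _ ≤ n * (m * t / n + 1) := le_of_lt this
        _ = (m * t / n + 1) * n := Nat.mul_comm _ _
  -- bucket m * n ≤ t * L m
  have htL : ∀ m, bucket m * n ≤ t * L m := by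
    intro m
    have h := Nat.lt_mul_div_succ (bucket m * n + (t - 1)) ht0
    rw [Nat.mul_add, Nat.mul_one] at h
    simp only [hLdef]
    omega
  -- L m ≤ m  (for m ≤ n)
  have hLle : ∀ m, m ≤ n → L m ≤ m := by
    intro m hm
    have h1 : bucket m * n + (t - 1) ≤ t * m + (t - 1) := by
      have := hbn m hm; omega
    calc L m ≤ (t * m + (t - 1)) / t := Nat.div_le_div_right h1
      _ = m + (t - 1) / t := Nat.mul_add_div ht0 _ _
      _ = m := by
          rw [Nat.div_eq_of_lt (show t - 1 < t by omega)]
          omega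
  -- real deviation bound
  have ht0' : (0 : ℝ) < t := by exact_mod_cast ht0
  have hdev : ∀ m, m ≤ n → (m : ℝ) - (L m : ℝ) ≤ (n : ℝ) / t := by
    intro m hm
    have h1 : ((bucket m * n : ℕ) : ℝ) ≤ ((t * L m : ℕ) : ℝ) := by
      exact_mod_cast htL m
    have h2 : ((t * m : ℕ) : ℝ) ≤ (((bucket m + 1) * n : ℕ) : ℝ) := by
      exact_mod_cast hmb m hm
    push_cast at h1 h2
    rw [le_div_iff₀ ht0']
    nlinarith [h1, h2]
  -- the covering map
  set B : (Fin (d' + 1) → ℕ) → (Fin d' → Fin t) :=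
    fun f i => ⟨bucket (f i.castSucc), hbuck_lt _⟩ with hB
  set G : (Fin d' → Fin t) → (Fin (d' + 1) → ℕ) :=
    fun b => Fin.snoc (fun i => ((b i : ℕ) * n + (t - 1)) / t)
      (n - ∑ i, ((b i : ℕ) * n + (t - 1)) / t) with hG
  have hGB : ∀ f : Fin (d' + 1) → ℕ,
      G (B f) = Fin.snoc (fun i : Fin d' => L (f i.castSucc))
        (n - ∑ i : Fin d', L (f i.castSucc)) := fun f => rfl
  refine ⟨Finset.image (fun f => G (B f)) (Finset.Nat.antidiagonalTuple (d' + 1) n),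
    ?_, ?_, ?_⟩
  · -- subset
    intro x hx
    simp only [Finset.mem_image] at hx
    obtain ⟨f, hf, rfl⟩ := hx
    rw [Finset.Nat.mem_antidiagonalTuple] at hf ⊢
    have hfle : ∀ i, f i ≤ n := by
      intro i
      rw [← hf]
      exact Finset.single_le_sum (fun _ _ => Nat.zero_le _) (Finset.mem_univ i)
    have hS : ∑ i : Fin d', L (f i.castSucc) ≤ n := by
      calc ∑ i : Fin d', L (f i.castSucc) ≤ ∑ i : Fin d', f i.castSucc :=
            Finset.sum_le_sum (fun i _ => hLle _ (hfle _))
        _ ≤ n := by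
            rw [← hf, Fin.sum_univ_castSucc]
            exact Nat.le_add_right _ _
    rw [hGB, Fin.sum_univ_castSucc]
    simp only [Fin.snoc_castSucc, Fin.snoc_last]
    omega
  · -- cardinality
    have hsub : Finset.image (fun f => G (B f)) (Finset.Nat.antidiagonalTuple (d' + 1) n)
        ⊆ Finset.image G Finset.univ := by
      intro x hx
      simp only [Finset.mem_image] at hx ⊢
      obtain ⟨f, _, rfl⟩ := hx
      exact ⟨B f, Finset.mem_univ _, rfl⟩
    calc (Finset.image (fun f => G (B f)) (Finset.Nat.antidiagonalTuple (d' + 1) n)).card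
        ≤ (Finset.image G Finset.univ).card := Finset.card_le_card hsub
      _ ≤ (Finset.univ : Finset (Fin d' → Fin t)).card := Finset.card_image_le
      _ = t ^ ((d' + 1) - 1) := by
          simp [Finset.card_univ]
  · -- covering property
    intro f hf
    rw [Finset.Nat.mem_antidiagonalTuple] at hf
    refine ⟨G (B f), Finset.mem_image_of_mem _ (by
      rw [Finset.Nat.mem_antidiagonalTuple]; exact hf), ?_⟩
    have hfle : ∀ i, f i ≤ n := by
      intro i
      rw [← hf]
      exact Finset.single_le_sum (fun _ _ => Nat.zero_le _) (Finset.mem_univ i)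
    rw [hGB]
    set S : ℕ := ∑ i : Fin d', L (f i.castSucc) with hSdef
    set F : ℕ := ∑ i : Fin d', f i.castSucc with hFdef
    have hLf : ∀ i : Fin d', L (f i.castSucc) ≤ f i.castSucc :=
      fun i => hLle _ (hfle _)
    have hSF : S ≤ F := Finset.sum_le_sum (fun i _ => hLf i)
    have hFn : F + f (Fin.last d') = n := by
      have h := hf
      rw [Fin.sum_univ_castSucc] at h
      exact h
    have hSn : S ≤ n := by omega
    rw [Fin.sum_univ_castSucc]
    simp only [Fin.snoc_castSucc, Fin.snoc_last]
    have e1 : ∑ i : Fin d', |(f i.castSucc : ℝ) - (L (f i.castSucc) : ℝ)|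
        = (F : ℝ) - (S : ℝ) := by
      rw [hFdef, hSdef]
      push_cast
      rw [← Finset.sum_sub_distrib]
      exact Finset.sum_congr rfl (fun i _ =>
        abs_of_nonneg (sub_nonneg.mpr (by exact_mod_cast hLf i)))
    have e2 : |(f (Fin.last d') : ℝ) - (((n - S : ℕ) : ℕ) : ℝ)| = (F : ℝ) - (S : ℝ) := by
      have hc : ((n - S : ℕ) : ℝ) = (n : ℝ) - (S : ℝ) := Nat.cast_sub hSn
      have hFl : (f (Fin.last d') : ℝ) = (n : ℝ) - (F : ℝ) := by
        have : (F : ℝ) + (f (Fin.last d') : ℝ) = (n : ℝ) := by exact_mod_cast hFn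
        linarith
      rw [hc, hFl, show (n : ℝ) - F - ((n : ℝ) - S) = -((F : ℝ) - S) by ring, abs_neg]
      exact abs_of_nonneg (sub_nonneg.mpr (by exact_mod_cast hSF))
    rw [e1, e2]
    have key : (F : ℝ) - (S : ℝ) ≤ (d' : ℝ) * ((n : ℝ) / t) := by
      have : (F : ℝ) - (S : ℝ)
          = ∑ i : Fin d', ((f i.castSucc : ℝ) - (L (f i.castSucc) : ℝ)) := by
        rw [hFdef, hSdef]; push_cast; rw [← Finset.sum_sub_distrib]
      rw [this]
      calc ∑ i : Fin d', ((f i.castSucc : ℝ) - (L (f i.castSucc) : ℝ))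
          ≤ ∑ _i : Fin d', (n : ℝ) / t :=
            Finset.sum_le_sum (fun i _ => hdev _ (hfle _))
        _ = (d' : ℝ) * ((n : ℝ) / t) := by
            rw [Finset.sum_const, Finset.card_univ, Fintype.card_fin, nsmul_eq_mul]
    have hrhs : ((d' + 1 : ℕ) : ℝ) - 1 = (d' : ℝ) := by push_cast; ring
    rw [hrhs]
    calc ((F : ℝ) - S + ((F : ℝ) - S)) / 2 = (F : ℝ) - S := by ring
      _ ≤ (d' : ℝ) * ((n : ℝ) / t) := key
      _ = (d' : ℝ) * n / t := by ring
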